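/- Let β ≥ 2. There exists a constant C > 0 (depending only on β) such that for all q, q̃, r ∈ ℝ² and all η > 0: |(∇G(q̃) − ∇G(q))·r| ≤ max(|p(q)|^{β−2}, |p(q̃)|^{β−2}) · ( (C/η) |p(q)−p(q̃)|² + η |r|² ), where |·| is the Euclidean norm on ℝ² and · the Euclidean inner product. -/

import Mathlib

/-- Cauchy–Schwarz in ℝ² with explicit square roots. -/
lemma cs_aux (u₁ u₂ v₁ v₂ : ℝ) :
    |u₁ * v₁ + u₂ * v₂| ≤ Real.sqrt (u₁ ^ 2 + u₂ ^ 2) * Real.sqrt (v₁ ^ 2 + v₂ ^ 2) := by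
  rw [← Real.sqrt_mul (by positivity), ← Real.sqrt_sq_eq_abs]
  exact Real.sqrt_le_sqrt (by nlinarith [sq_nonneg (u₁ * v₂ - u₂ * v₁)])

/-- Triangle inequality in ℝ² with explicit square roots. -/
lemma tri_aux (v₁ v₂ w₁ w₂ : ℝ) :
    Real.sqrt ((v₁ + w₁) ^ 2 + (v₂ + w₂) ^ 2) ≤
      Real.sqrt (v₁ ^ 2 + v₂ ^ 2) + Real.sqrt (w₁ ^ 2 + w₂ ^ 2) := by
  have h := cs_aux v₁ v₂ w₁ w₂
  have h' := le_abs_self (v₁ * w₁ + v₂ * w₂)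
  have hA := Real.sq_sqrt (show (0:ℝ) ≤ v₁ ^ 2 + v₂ ^ 2 by positivity)
  have hB := Real.sq_sqrt (show (0:ℝ) ≤ w₁ ^ 2 + w₂ ^ 2 by positivity)
  have h2 : (v₁ + w₁) ^ 2 + (v₂ + w₂) ^ 2 ≤
      (Real.sqrt (v₁ ^ 2 + v₂ ^ 2) + Real.sqrt (w₁ ^ 2 + w₂ ^ 2)) ^ 2 := by nlinarith
  calc Real.sqrt ((v₁ + w₁) ^ 2 + (v₂ + w₂) ^ 2)
      ≤ Real.sqrt ((Real.sqrt (v₁ ^ 2 + v₂ ^ 2) + Real.sqrt (w₁ ^ 2 + w₂ ^ 2)) ^ 2) :=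
        Real.sqrt_le_sqrt h2
    _ = _ := Real.sqrt_sq (by positivity)

/-- `1 - x^γ ≤ max γ 1 * (1 - x)` for `x ∈ [0,1]`, `γ ≥ 0`. -/
lemma pow_gap (γ : ℝ) (hγ : 0 ≤ γ) {x : ℝ} (hx0 : 0 ≤ x) (hx1 : x ≤ 1) :
    1 - x ^ γ ≤ max γ 1 * (1 - x) := by
  rcases le_or_gt γ 1 with hγ1 | hγ1
  · rw [max_eq_right hγ1]
    rcases eq_or_lt_of_le hx0 with hx | hx
    · rcases eq_or_lt_of_le hγ with hg | hg
      · rw [← hg, ← hx]; norm_num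
      · rw [← hx, Real.zero_rpow (ne_of_gt hg)]; norm_num
    · have : x ^ (1:ℝ) ≤ x ^ γ := Real.rpow_le_rpow_of_exponent_ge hx hx1 hγ1
      rw [Real.rpow_one] at this
      linarith
  · rw [max_eq_left hγ1.le]
    have h := one_add_mul_self_le_rpow_one_add (show (-1:ℝ) ≤ x - 1 by linarith) hγ1.le
    have hx' : (1:ℝ) + (x - 1) = x := by ring
    rw [hx'] at h
    nlinarith

/-- `(s^γ - t^γ) s ≤ (β-1) s^γ (s - t)` for `0 ≤ t ≤ s`, `γ = β - 2`, `β ≥ 2`. -/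
lemma scalar_aux (β : ℝ) (hβ : 2 ≤ β) {t s : ℝ} (ht : 0 ≤ t) (hts : t ≤ s) :
    (s ^ (β - 2) - t ^ (β - 2)) * s ≤ (β - 1) * s ^ (β - 2) * (s - t) := by
  rcases eq_or_lt_of_le (ht.trans hts) with hs | hs
  · have ht0 : t = 0 := le_antisymm (by linarith) ht
    rw [← hs, ht0]
    norm_num
  · set x := t / s with hxdef
    have hx0 : 0 ≤ x := div_nonneg ht hs.le
    have hx1 : x ≤ 1 := (div_le_one hs).2 hts
    have hγ : (0:ℝ) ≤ β - 2 := by linarith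
    have hgap := pow_gap (β - 2) hγ hx0 hx1
    have hmax : max (β - 2) 1 ≤ β - 1 := max_le (by linarith) (by linarith)
    have h1 : 1 - x ^ (β - 2) ≤ (β - 1) * (1 - x) := by
      have := mul_le_mul_of_nonneg_right hmax (show (0:ℝ) ≤ 1 - x by linarith)
      linarith
    have ht' : t = x * s := by
      rw [hxdef, div_mul_cancel₀ t (ne_of_gt hs)]
    have ht_eq : t ^ (β - 2) = x ^ (β - 2) * s ^ (β - 2) := by
      rw [ht', Real.mul_rpow hx0 hs.le]
    have hsγ : 0 ≤ s ^ (β - 2) := Real.rpow_nonneg hs.le _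
    rw [ht_eq, ht']
    nlinarith [mul_le_mul_of_nonneg_right h1 (mul_nonneg hsγ hs.le)]

/-- Key vector bound: `|a^γ p - b^γ q| ≤ β b^γ |p - q|` when `|p| ≤ |q|`. -/
lemma vec_bound (β : ℝ) (hβ : 2 ≤ β) (p₁ p₂ q₁ q₂ : ℝ)
    (hab : Real.sqrt (p₁ ^ 2 + p₂ ^ 2) ≤ Real.sqrt (q₁ ^ 2 + q₂ ^ 2)) :
    Real.sqrt ((Real.sqrt (p₁ ^ 2 + p₂ ^ 2) ^ (β - 2) * p₁ -
        Real.sqrt (q₁ ^ 2 + q₂ ^ 2) ^ (β - 2) * q₁) ^ 2 +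
      (Real.sqrt (p₁ ^ 2 + p₂ ^ 2) ^ (β - 2) * p₂ -
        Real.sqrt (q₁ ^ 2 + q₂ ^ 2) ^ (β - 2) * q₂) ^ 2) ≤
    β * Real.sqrt (q₁ ^ 2 + q₂ ^ 2) ^ (β - 2) *
      Real.sqrt ((p₁ - q₁) ^ 2 + (p₂ - q₂) ^ 2) := by
  set a := Real.sqrt (p₁ ^ 2 + p₂ ^ 2) with ha
  set b := Real.sqrt (q₁ ^ 2 + q₂ ^ 2) with hb
  have ha0 : 0 ≤ a := Real.sqrt_nonneg _
  have hb0 : 0 ≤ b := Real.sqrt_nonneg _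
  set A := a ^ (β - 2) with hA
  set B := b ^ (β - 2) with hB
  have hA0 : 0 ≤ A := Real.rpow_nonneg ha0 _
  have hB0 : 0 ≤ B := Real.rpow_nonneg hb0 _
  have hAB : A ≤ B := Real.rpow_le_rpow ha0 hab (by linarith)
  set δ := Real.sqrt ((p₁ - q₁) ^ 2 + (p₂ - q₂) ^ 2) with hδ
  have hδ0 : 0 ≤ δ := Real.sqrt_nonneg _
  -- triangle: split A p - B q = A (p - q) + (A - B) q
  have htri : Real.sqrt ((A * p₁ - B * q₁) ^ 2 + (A * p₂ - B * q₂) ^ 2) ≤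
      Real.sqrt ((A * (p₁ - q₁)) ^ 2 + (A * (p₂ - q₂)) ^ 2) +
      Real.sqrt (((A - B) * q₁) ^ 2 + ((A - B) * q₂) ^ 2) := by
    have := tri_aux (A * (p₁ - q₁)) (A * (p₂ - q₂)) ((A - B) * q₁) ((A - B) * q₂)
    have he₁ : A * (p₁ - q₁) + (A - B) * q₁ = A * p₁ - B * q₁ := by ring
    have he₂ : A * (p₂ - q₂) + (A - B) * q₂ = A * p₂ - B * q₂ := by ring
    rw [he₁, he₂] at this
    exact this
  have hterm1 : Real.sqrt ((A * (p₁ - q₁)) ^ 2 + (A * (p₂ - q₂)) ^ 2) = A * δ := by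
    rw [mul_pow, mul_pow, ← mul_add, Real.sqrt_mul (sq_nonneg A), Real.sqrt_sq_eq_abs,
      abs_of_nonneg hA0]
  have hterm2 : Real.sqrt (((A - B) * q₁) ^ 2 + ((A - B) * q₂) ^ 2) = (B - A) * b := by
    rw [mul_pow, mul_pow, ← mul_add, Real.sqrt_mul (sq_nonneg (A - B)),
      Real.sqrt_sq_eq_abs, abs_of_nonpos (by linarith), ← hb]
    ring
  -- reverse triangle: b - a ≤ δ
  have hrev : b - a ≤ δ := by
    have := tri_aux p₁ p₂ (q₁ - p₁) (q₂ - p₂)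
    have he₁ : p₁ + (q₁ - p₁) = q₁ := by ring
    have he₂ : p₂ + (q₂ - p₂) = q₂ := by ring
    rw [he₁, he₂] at this
    have hδ' : Real.sqrt ((q₁ - p₁) ^ 2 + (q₂ - p₂) ^ 2) = δ := by
      rw [hδ, show (p₁ - q₁) ^ 2 = (q₁ - p₁) ^ 2 by ring,
        show (p₂ - q₂) ^ 2 = (q₂ - p₂) ^ 2 by ring]
    rw [hδ'] at this
    rw [← hb, ← ha] at this
    linarith
  have hscal : (B - A) * b ≤ (β - 1) * B * δ := by
    have h1 := scalar_aux β hβ ha0 hab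
    rw [← hA, ← hB] at h1
    have h2 : (β - 1) * B * (b - a) ≤ (β - 1) * B * δ := by
      apply mul_le_mul_of_nonneg_left hrev
      have : (0:ℝ) ≤ β - 1 := by linarith
      positivity
    nlinarith
  calc Real.sqrt ((A * p₁ - B * q₁) ^ 2 + (A * p₂ - B * q₂) ^ 2)
      ≤ A * δ + (B - A) * b := by rw [← hterm1, ← hterm2]; exact htri
    _ ≤ A * δ + (β - 1) * B * δ := by linarith
    _ ≤ B * δ + (β - 1) * B * δ := by nlinarith [mul_le_mul_of_nonneg_right hAB hδ0]
    _ = β * B * δ := by ring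

set_option maxHeartbeats 1000000 in
/-- The main estimate for plain real variables. -/
lemma main_aux (β : ℝ) (hβ : 2 ≤ β) (p₁ p₂ s₁ s₂ r₁ r₂ η : ℝ) (hη : 0 < η) :
    |(β * Real.sqrt (s₁ ^ 2 + s₂ ^ 2) ^ (β - 2) * (-s₁) -
        β * Real.sqrt (p₁ ^ 2 + p₂ ^ 2) ^ (β - 2) * (-p₁)) * r₁ +
      (β * Real.sqrt (s₁ ^ 2 + s₂ ^ 2) ^ (β - 2) * s₂ -
        β * Real.sqrt (p₁ ^ 2 + p₂ ^ 2) ^ (β - 2) * p₂) * r₂| ≤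
    max (Real.sqrt (p₁ ^ 2 + p₂ ^ 2) ^ (β - 2)) (Real.sqrt (s₁ ^ 2 + s₂ ^ 2) ^ (β - 2)) *
      ((β ^ 4 / 4 / η) * ((p₁ - s₁) ^ 2 + (p₂ - s₂) ^ 2) + η * (r₁ ^ 2 + r₂ ^ 2)) := by
  set a := Real.sqrt (p₁ ^ 2 + p₂ ^ 2) with ha
  set b := Real.sqrt (s₁ ^ 2 + s₂ ^ 2) with hb
  set A := a ^ (β - 2) with hA
  set B := b ^ (β - 2) with hB
  have hA0 : 0 ≤ A := Real.rpow_nonneg (Real.sqrt_nonneg _) _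
  have hB0 : 0 ≤ B := Real.rpow_nonneg (Real.sqrt_nonneg _) _
  set m := max A B with hm
  have hm0 : 0 ≤ m := le_trans hA0 (le_max_left _ _)
  set δ := Real.sqrt ((p₁ - s₁) ^ 2 + (p₂ - s₂) ^ 2) with hδ
  have hδ0 : 0 ≤ δ := Real.sqrt_nonneg _
  set R := Real.sqrt (r₁ ^ 2 + r₂ ^ 2) with hR
  have hR0 : 0 ≤ R := Real.sqrt_nonneg _
  have hβ0 : (0:ℝ) < β := by linarith
  have hu₁ : β * B * (-s₁) - β * A * (-p₁) = β * (A * p₁ - B * s₁) := by ring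
  have hu₂ : β * B * s₂ - β * A * p₂ = -(β * (A * p₂ - B * s₂)) := by ring
  rw [hu₁, hu₂]
  have hcs := cs_aux (β * (A * p₁ - B * s₁)) (-(β * (A * p₂ - B * s₂))) r₁ r₂
  have hnorm : Real.sqrt ((β * (A * p₁ - B * s₁)) ^ 2 + (-(β * (A * p₂ - B * s₂))) ^ 2)
      = β * Real.sqrt ((A * p₁ - B * s₁) ^ 2 + (A * p₂ - B * s₂) ^ 2) := by
    rw [show (β * (A * p₁ - B * s₁)) ^ 2 + (-(β * (A * p₂ - B * s₂))) ^ 2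
        = β ^ 2 * ((A * p₁ - B * s₁) ^ 2 + (A * p₂ - B * s₂) ^ 2) by ring,
      Real.sqrt_mul (sq_nonneg β), Real.sqrt_sq hβ0.le]
  have hkey : Real.sqrt ((A * p₁ - B * s₁) ^ 2 + (A * p₂ - B * s₂) ^ 2) ≤ β * m * δ := by
    rcases le_or_gt a b with hab | hab
    · have h := vec_bound β hβ p₁ p₂ s₁ s₂ hab
      rw [← hA, ← hB, ← hδ] at h
      calc Real.sqrt ((A * p₁ - B * s₁) ^ 2 + (A * p₂ - B * s₂) ^ 2)
          ≤ β * B * δ := h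
        _ ≤ β * m * δ := by
            apply mul_le_mul_of_nonneg_right _ hδ0
            exact mul_le_mul_of_nonneg_left (le_max_right A B) hβ0.le
    · have h := vec_bound β hβ s₁ s₂ p₁ p₂ hab.le
      rw [← hA, ← hB] at h
      have heq : Real.sqrt ((B * s₁ - A * p₁) ^ 2 + (B * s₂ - A * p₂) ^ 2)
          = Real.sqrt ((A * p₁ - B * s₁) ^ 2 + (A * p₂ - B * s₂) ^ 2) := by
        rw [show (B * s₁ - A * p₁) ^ 2 = (A * p₁ - B * s₁) ^ 2 by ring,
          show (B * s₂ - A * p₂) ^ 2 = (A * p₂ - B * s₂) ^ 2 by ring]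
      have hδeq : Real.sqrt ((s₁ - p₁) ^ 2 + (s₂ - p₂) ^ 2) = δ := by
        rw [hδ, show (p₁ - s₁) ^ 2 = (s₁ - p₁) ^ 2 by ring,
          show (p₂ - s₂) ^ 2 = (s₂ - p₂) ^ 2 by ring]
      rw [heq, hδeq] at h
      calc Real.sqrt ((A * p₁ - B * s₁) ^ 2 + (A * p₂ - B * s₂) ^ 2)
          ≤ β * A * δ := h
        _ ≤ β * m * δ := by
            apply mul_le_mul_of_nonneg_right _ hδ0
            exact mul_le_mul_of_nonneg_left (le_max_left A B) hβ0.le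
  have hδ2 : δ ^ 2 = (p₁ - s₁) ^ 2 + (p₂ - s₂) ^ 2 := Real.sq_sqrt (by positivity)
  have hR2 : R ^ 2 = r₁ ^ 2 + r₂ ^ 2 := Real.sq_sqrt (by positivity)
  have hyoung : β ^ 2 * δ * R ≤ (β ^ 4 / 4) / η * δ ^ 2 + η * R ^ 2 := by
    have hsq := sq_nonneg (β ^ 2 * δ - 2 * η * R)
    have heq : ((β ^ 4 / 4) / η * δ ^ 2 + η * R ^ 2 - β ^ 2 * δ * R) * (4 * η)
        = (β ^ 2 * δ - 2 * η * R) ^ 2 := by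
      field_simp
      ring
    nlinarith [hη, hsq, heq]
  calc |β * (A * p₁ - B * s₁) * r₁ + -(β * (A * p₂ - B * s₂)) * r₂|
      ≤ Real.sqrt ((β * (A * p₁ - B * s₁)) ^ 2 + (-(β * (A * p₂ - B * s₂))) ^ 2) * R := hcs
    _ = β * Real.sqrt ((A * p₁ - B * s₁) ^ 2 + (A * p₂ - B * s₂) ^ 2) * R := by rw [hnorm]
    _ ≤ β * (β * m * δ) * R := by
        apply mul_le_mul_of_nonneg_right _ hR0
        exact mul_le_mul_of_nonneg_left hkey hβ0.le
    _ = m * (β ^ 2 * δ * R) := by ring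
    _ ≤ m * ((β ^ 4 / 4) / η * δ ^ 2 + η * R ^ 2) := mul_le_mul_of_nonneg_left hyoung hm0
    _ = m * ((β ^ 4 / 4 / η) * ((p₁ - s₁) ^ 2 + (p₂ - s₂) ^ 2) + η * (r₁ ^ 2 + r₂ ^ 2)) := by
        rw [hδ2, hR2]

/-- `p(q) = (q₁⁻, q₂⁺)` where `t⁻ = max(-t,0)` and `t⁺ = max(t,0)`. -/
noncomputable def pmap (q : ℝ × ℝ) : ℝ × ℝ := (max (-q.1) 0, max q.2 0)

/-- Euclidean norm on `ℝ²`. -/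
noncomputable def eucEnorm (p : ℝ × ℝ) : ℝ := Real.sqrt (p.1 ^ 2 + p.2 ^ 2)

/-- `G(q₁,q₂) = ((q₁⁻)² + (q₂⁺)²)^{β/2}`. -/
noncomputable def Gfun (β : ℝ) (q : ℝ × ℝ) : ℝ :=
  ((pmap q).1 ^ 2 + (pmap q).2 ^ 2) ^ (β / 2)

/-- The gradient `∇G(q) = β |p(q)|^{β-2} (-q₁⁻, q₂⁺)`. -/
noncomputable def gradG (β : ℝ) (q : ℝ × ℝ) : ℝ × ℝ :=
  (β * eucEnorm (pmap q) ^ (β - 2) * (-(pmap q).1),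
   β * eucEnorm (pmap q) ^ (β - 2) * (pmap q).2)

set_option maxHeartbeats 1000000 in
/-- Young-type estimate for `|(∇G(q̃) - ∇G(q))·r|`. -/
theorem stmt_13 (β : ℝ) (hβ : 2 ≤ β) :
    ∃ C : ℝ, 0 < C ∧ ∀ (q qt r : ℝ × ℝ) (η : ℝ), 0 < η →
      |((gradG β qt).1 - (gradG β q).1) * r.1 +
          ((gradG β qt).2 - (gradG β q).2) * r.2| ≤
        max (eucEnorm (pmap q) ^ (β - 2)) (eucEnorm (pmap qt) ^ (β - 2)) *
          ((C / η) *
              (((pmap q).1 - (pmap qt).1) ^ 2 + ((pmap q).2 - (pmap qt).2) ^ 2) +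
            η * (r.1 ^ 2 + r.2 ^ 2)) := by
  refine ⟨β ^ 4 / 4, by positivity, ?_⟩
  intro q qt r η hη
  have h := main_aux β hβ (pmap q).1 (pmap q).2 (pmap qt).1 (pmap qt).2 r.1 r.2 η hη
  simp only [gradG, eucEnorm]
  exact h
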